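/- arXiv:1502.04633 — 2 statements merged into one kernel-verified Lean document; each statement's English description precedes it below -/
import Mathlib

section
/- Let F be a zig-zag network of order n, let u, v ∈ S_n, and suppose π = (π_1,…,π_n) is a path family covering F such that for each m the path π_{u_m} (starting at source u_m) ends at sink v_m. Let U(u,π) be the one-rowed tableau listing π_{u_1},…,π_{u_n} from left to right. Suppose u_i > u_{i+1}, and let u′ (resp. v′) be obtained from u (resp. v) by interchanging the entries in positions i and i+1 of the one-line notation. Then: (1) if v_i < v_{i+1}, then rinv(U(u,π)) = rinv(U(u′,π)) − 1; (2) if v_i > v_{i+1} and no path family ρ covering F has its path from source u_m ending at sink v′_m for every m, then rinv(U(u,π)) = rinv(U(u′,π)); (3) if v_i > v_{i+1} and some such path family covering F exists, then rinv(U(u,π)) = rinv(U(u′,π)) + 1. -/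
namespace ZigZag

noncomputable section

attribute [local instance] Classical.propDecidable

/-- Vertices of a network of order `n` built from `t` stars:
sources, sinks and central vertices. -/
inductive V (n t : ℕ) : Type
  | src : Fin n → V n t
  | snk : Fin n → V n t
  | ctr : Fin t → V n t
  deriving DecidableEq

/-- Data of a concatenation `G_{[c 0, d 0]} ∘ ⋯ ∘ G_{[c (t-1), d (t-1)]}` of star
networks of order `n`: pairwise distinct, pairwise non-nesting intervals
satisfying the triple-overlap condition. -/
structure IntervalData (n t : ℕ) : Type where
  c : Fin t → Fin n
  d : Fin t → Fin n
  cd_le : ∀ k, c k ≤ d k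
  nonnest : ∀ k l : Fin t, k ≠ l → ¬ (c k ≤ c l ∧ d l ≤ d k)
  tripleOverlap : ∀ k l m : Fin t, k < l → l < m →
    (c k ≤ d l ∧ c l ≤ d k) → (c l ≤ d m ∧ c m ≤ d l) →
    (c k < c l ∧ c l < c m) ∨ (c m < c l ∧ c l < c k)

variable {n t : ℕ}

/-- `i` belongs to the `k`-th interval `[c k, d k]`. -/
def IntervalData.mem (D : IntervalData n t) (k : Fin t) (i : Fin n) : Prop :=
  D.c k ≤ i ∧ i ≤ D.d k

/-- Edges of the zig-zag network associated to `D` (collapsing the parallel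
central edges, i.e. keeping one path per covering pair). -/
inductive Edge (D : IntervalData n t) : V n t → V n t → Prop
  | srcCtr (i : Fin n) (k : Fin t) : D.mem k i → (∀ l, l < k → ¬ D.mem l i) →
      Edge D (V.src i) (V.ctr k)
  | ctrSnk (i : Fin n) (k : Fin t) : D.mem k i → (∀ l, k < l → ¬ D.mem l i) →
      Edge D (V.ctr k) (V.snk i)
  | srcSnk (i : Fin n) : (∀ k, ¬ D.mem k i) → Edge D (V.src i) (V.snk i)
  | ctrCtr (i : Fin n) (k l : Fin t) : k < l → D.mem k i → D.mem l i →
      (∀ m, k < m → m < l → ¬ D.mem m i) → Edge D (V.ctr k) (V.ctr l)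

/-- A directed path (a nonempty list of successively adjacent vertices)
from `x` to `y` in the digraph with edge relation `E`. -/
def PathIn (E : V n t → V n t → Prop) (p : List (V n t)) (x y : V n t) : Prop :=
  p ≠ [] ∧ p.Chain' E ∧ p.head? = some x ∧ p.getLast? = some y

/-- A directed path from source `i` to sink `j` in the zig-zag network of `D`. -/
def IsPathFromTo (D : IntervalData n t) (p : List (V n t)) (i j : Fin n) : Prop :=
  PathIn (Edge D) p (V.src i) (V.snk j)

/-- The intervals `[c k, d k]` and `[c l, d l]` intersect. -/
def Intersects (D : IntervalData n t) (k l : Fin t) : Prop :=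
  D.c k ≤ D.d l ∧ D.c l ≤ D.d k

/-- The covering relation `⋖` on the intervals of the concatenation. -/
def Cov (D : IntervalData n t) (k l : Fin t) : Prop :=
  k < l ∧ Intersects D k l ∧
    ∀ m, k < m → m < l → ∀ i : Fin n, ¬ (D.mem k i ∧ D.mem l i ∧ D.mem m i)

/-- The strict partial order `≺` generated by the covering relation. -/
def Prec (D : IntervalData n t) : Fin t → Fin t → Prop :=
  Relation.TransGen (Cov D)

/-- A path family of type `v`: the `i`-th path runs from source `i` to sink `v i`. -/
def IsFamilyOfType (D : IntervalData n t) (fam : Fin n → List (V n t))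
    (v : Equiv.Perm (Fin n)) : Prop :=
  ∀ i, IsPathFromTo D (fam i) i (v i)

/-- The path family covers the network: every edge lies on some path. -/
def Covers (D : IntervalData n t) (fam : Fin n → List (V n t)) : Prop :=
  ∀ x y, Edge D x y → ∃ i, [x, y] <:+: fam i

/-- Bruhat order on `S_n`. -/
def BruhatLE (v w : Equiv.Perm (Fin n)) : Prop :=
  ∀ i j : Fin n,
    (Finset.univ.filter fun k : Fin n => k ≤ i ∧ j ≤ v k).card ≤
      (Finset.univ.filter fun k : Fin n => k ≤ i ∧ j ≤ w k).card

/-- `D` is interval data for the zig-zag network `F_w`: a path family of type `v`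
covers it iff `v ≤ w` in Bruhat order, and such families are unique. -/
def Represents (D : IntervalData n t) (w : Equiv.Perm (Fin n)) : Prop :=
  ∀ v : Equiv.Perm (Fin n),
    ((∃ fam, IsFamilyOfType D fam v ∧ Covers D fam) ↔ BruhatLE v w) ∧
    ∀ fam fam', IsFamilyOfType D fam v → Covers D fam →
      IsFamilyOfType D fam' v → Covers D fam' → fam = fam'

def Avoids3412 (w : Equiv.Perm (Fin n)) : Prop :=
  ¬ ∃ i1 i2 i3 i4 : Fin n, i1 < i2 ∧ i2 < i3 ∧ i3 < i4 ∧
    w i3 < w i4 ∧ w i4 < w i1 ∧ w i1 < w i2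

def Avoids4231 (w : Equiv.Perm (Fin n)) : Prop :=
  ¬ ∃ i1 i2 i3 i4 : Fin n, i1 < i2 ∧ i2 < i3 ∧ i3 < i4 ∧
    w i4 < w i2 ∧ w i2 < w i3 ∧ w i3 < w i1

def Avoids312 (w : Equiv.Perm (Fin n)) : Prop :=
  ¬ ∃ i1 i2 i3 : Fin n, i1 < i2 ∧ i2 < i3 ∧ w i2 < w i3 ∧ w i3 < w i1

/-- The source-`i`-to-sink-`i` and source-`j`-to-sink-`j` paths share a vertex. -/
def PathsIntersect (D : IntervalData n t) (i j : Fin n) : Prop :=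
  ∃ p q, IsPathFromTo D p i i ∧ IsPathFromTo D q j j ∧ ∃ x, x ∈ p ∧ x ∈ q

/-- The strict order of the poset `P(F)`. -/
def PRel (D : IntervalData n t) (i j : Fin n) : Prop :=
  i < j ∧ ¬ PathsIntersect D i j

/-- Descending star network: `c 0 > c 1 > ⋯`. -/
def Descending (D : IntervalData n t) : Prop :=
  ∀ k l : Fin t, k < l → D.c l < D.c k

/-- Incomparability for a strict order. -/
def Incomp {α : Type*} (r : α → α → Prop) (x y : α) : Prop :=
  x ≠ y ∧ ¬ r x y ∧ ¬ r y x

/-- A strict order is a unit interval order if it is (3+1)-free and (2+2)-free. -/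
def UnitIntervalOrder {α : Type*} (r : α → α → Prop) : Prop :=
  (¬ ∃ a b c x, r a b ∧ r b c ∧ Incomp r x a ∧ Incomp r x b ∧ Incomp r x c) ∧
  (¬ ∃ a b x y, r a b ∧ r x y ∧ Incomp r a x ∧ Incomp r a y ∧
      Incomp r b x ∧ Incomp r b y)

/-- `lam` is a partition of `n`. -/
def IsPartition (lam : List ℕ) (n : ℕ) : Prop :=
  lam.Pairwise (· ≥ ·) ∧ (∀ x ∈ lam, 0 < x) ∧ lam.sum = n

/-- An `F`-tableau of shape `lam` (French notation): a covering path family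
together with an arrangement of the `n` source indices into rows of
lengths `lam`. -/
structure Tableau (D : IntervalData n t) (lam : List ℕ) : Type where
  fam : Fin n → List (V n t)
  typ : Equiv.Perm (Fin n)
  isFam : IsFamilyOfType D fam typ
  covers : Covers D fam
  rows : List (List (Fin n))
  shape : rows.map List.length = lam
  nodup : rows.flatten.Nodup
  complete : ∀ i : Fin n, i ∈ rows.flatten

namespace Tableau

variable {D : IntervalData n t} {lam : List ℕ}

/-- The paths indexed by `a` and `b` share a vertex. -/
def Intersect (U : Tableau D lam) (a b : Fin n) : Prop :=
  ∃ x, x ∈ U.fam a ∧ x ∈ U.fam b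

def RowClosed (U : Tableau D lam) : Prop :=
  ∀ r ∈ U.rows, (r.map ⇑U.typ).Perm r

def LeftRowStrict (U : Tableau D lam) : Prop :=
  ∀ r ∈ U.rows, r.Chain' (· < ·)

def RowSemistrict (U : Tableau D lam) : Prop :=
  ∀ r ∈ U.rows, r.Chain' fun a b => ¬ (b < a ∧ ¬ U.Intersect a b)

def CycRowSemistrict (U : Tableau D lam) : Prop :=
  U.RowSemistrict ∧ ∀ r ∈ U.rows, ∀ a b : Fin n,
    r.getLast? = some a → r.head? = some b → ¬ (b < a ∧ ¬ U.Intersect a b)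

def RowStrict (U : Tableau D lam) : Prop :=
  ∀ r ∈ U.rows, r.Chain' fun a b => a < b ∧ ¬ U.Intersect a b

def RightAnchored (U : Tableau D lam) : Prop :=
  ∀ r ∈ U.rows, ∀ a : Fin n, r.getLast? = some a → ∀ b ∈ r, a ≤ b

def LeftAnchored (U : Tableau D lam) : Prop :=
  ∀ r ∈ U.rows, ∀ a : Fin n, r.head? = some a → ∀ b ∈ r, a ≤ b

def Cylindrical (U : Tableau D lam) : Prop :=
  ∀ r ∈ U.rows, r.map ⇑U.typ = r.rotate 1

def TypeE (U : Tableau D lam) : Prop := U.typ = 1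

/-- `inv (U_1 ∘ ⋯ ∘ U_r)`: inversions of the concatenation of the rows. -/
def invConcat (U : Tableau D lam) : ℕ :=
  Set.ncard {p : Fin U.rows.flatten.length × Fin U.rows.flatten.length |
    p.1 < p.2 ∧ U.Intersect (U.rows.flatten.get p.1) (U.rows.flatten.get p.2) ∧
      U.rows.flatten.get p.2 < U.rows.flatten.get p.1}

/-- `inv (U^R)` for a one-rowed tableau `U`. -/
def invR (U : Tableau D lam) : ℕ :=
  Set.ncard {p : Fin U.rows.flatten.length × Fin U.rows.flatten.length |
    p.1 < p.2 ∧ U.Intersect (U.rows.flatten.get p.1) (U.rows.flatten.get p.2) ∧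
      U.rows.flatten.get p.1 < U.rows.flatten.get p.2}

/-- `rinv` of a single row `r`. -/
def rinvRow (U : Tableau D lam) (r : List (Fin n)) : ℕ :=
  Set.ncard {p : Fin r.length × Fin r.length |
    p.1 < p.2 ∧ U.Intersect (r.get p.1) (r.get p.2) ∧
      U.typ (r.get p.2) < U.typ (r.get p.1)}

/-- `rinv (U_1) + ⋯ + rinv (U_r)`. -/
def rinvRowsSum (U : Tableau D lam) : ℕ := (U.rows.map U.rinvRow).sum

/-- `inv (U^tr)`: inversions between entries of distinct rows. -/
def invTr (U : Tableau D lam) : ℕ :=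
  Set.ncard {p : Fin n × Fin n |
    (∃ j1 j2 : ℕ, j1 < j2 ∧ p.1 ∈ U.rows.getD j1 [] ∧ p.2 ∈ U.rows.getD j2 []) ∧
      U.Intersect p.1 p.2 ∧ p.2 < p.1}

/-- `rinv (U^tr)`: right inversions between entries of distinct rows. -/
def rinvTr (U : Tableau D lam) : ℕ :=
  Set.ncard {p : Fin n × Fin n |
    (∃ j1 j2 : ℕ, j1 < j2 ∧ p.1 ∈ U.rows.getD j1 [] ∧ p.2 ∈ U.rows.getD j2 []) ∧
      U.Intersect p.1 p.2 ∧ U.typ p.2 < U.typ p.1}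

end Tableau

/-- Row `j` of `U` has entry set `I j`. -/
def RowContents {D : IntervalData n t} {lam : List ℕ} (U : Tableau D lam)
    (I : Fin lam.length → Finset (Fin n)) : Prop :=
  ∀ j : Fin lam.length, (U.rows.getD (j : ℕ) []).toFinset = I j

/-- `[a]_q = 1 + q + ⋯ + q^(a-1)`. -/
noncomputable def qNat (a : ℕ) : Polynomial ℤ := ∑ i ∈ Finset.range a, Polynomial.X ^ i

/-- `[a]_q! = [a]_q [a-1]_q ⋯ [1]_q`. -/
noncomputable def qFact (a : ℕ) : Polynomial ℤ := ∏ i ∈ Finset.range a, qNat (i + 1)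

/-- The network is connected as an (undirected) graph. -/
def Connected (D : IntervalData n t) : Prop :=
  ∀ x y : V n t, Relation.ReflTransGen (fun a b => Edge D a b ∨ Edge D b a) x y

noncomputable def Onum (D : IntervalData n t) : Polynomial ℤ :=
  ∏ k : Fin t, qFact ((D.d k : ℕ) - (D.c k : ℕ))

noncomputable def Oden (D : IntervalData n t) : Polynomial ℤ :=
  ∏ p : Fin t × Fin t,
    if Cov D p.1 p.2 then
      if D.c p.1 < D.c p.2 then qFact ((D.d p.1 : ℕ) - (D.c p.2 : ℕ))
      else qFact ((D.d p.2 : ℕ) - (D.c p.1 : ℕ))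
    else 1

/-- The rational function `O(F)`, an element of the fraction field of `ℤ[q]`. -/
noncomputable def OF (D : IntervalData n t) : FractionRing (Polynomial ℤ) :=
  if Connected D then
    algebraMap (Polynomial ℤ) (FractionRing (Polynomial ℤ)) (Onum D) /
      algebraMap (Polynomial ℤ) (FractionRing (Polynomial ℤ)) (Oden D)
  else 0

/-- Cycle type of a permutation, as a partition of `n` (including fixed points). -/
noncomputable def fullCycleType (v : Equiv.Perm (Fin n)) : Multiset ℕ :=
  v.cycleType + Multiset.replicate (n - v.support.card) 1

/-- `z_λ = 1^{α_1} 2^{α_2} ⋯ α_1! α_2! ⋯`. -/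
noncomputable def zPart (lam : List ℕ) : ℕ :=
  lam.prod * ∏ i ∈ lam.toFinset, (lam.count i).factorial

/-- `rinv (U(u, π))` where the one-rowed tableau `U(u,π)` lists the paths
`fam (u 0), fam (u 1), …` whose sinks are `v 0, v 1, …`. -/
def rinvU (D : IntervalData n t) (fam : Fin n → List (V n t))
    (u v : Equiv.Perm (Fin n)) : ℕ :=
  Set.ncard {p : Fin n × Fin n | p.1 < p.2 ∧
    (∃ x, x ∈ fam (u p.1) ∧ x ∈ fam (u p.2)) ∧ v p.2 < v p.1}

/-- Edges of the restricted network `F|_S`, the union of the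
source-`i`-to-sink-`i` paths for `i ∈ S`. -/
def REdge (D : IntervalData n t) (S : Finset (Fin n)) (x y : V n t) : Prop :=
  Edge D x y ∧ ∃ i ∈ S, ∃ p, IsPathFromTo D p i i ∧ [x, y] <:+: p

/-- A cylindrical one-rowed tableau of the restricted network `F|_S`. -/
structure SubRowTab (D : IntervalData n t) (S : Finset (Fin n)) : Type where
  row : List (Fin n)
  nodup : row.Nodup
  content : row.toFinset = S
  fam : Fin n → List (V n t)
  isPath : ∀ m : Fin row.length,
    PathIn (REdge D S) (fam (row.get m)) (V.src (row.get m))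
      (V.snk (row.get ⟨((m : ℕ) + 1) % row.length, Nat.mod_lt _ m.pos⟩))
  covers : ∀ x y, REdge D S x y → ∃ a ∈ row, [x, y] <:+: fam a

/-- Inversions of a one-rowed subnetwork tableau. -/
def SubRowTab.Inv {D : IntervalData n t} {S : Finset (Fin n)}
    (W : SubRowTab D S) : ℕ :=
  Set.ncard {p : Fin W.row.length × Fin W.row.length | p.1 < p.2 ∧
    (∃ x, x ∈ W.fam (W.row.get p.1) ∧ x ∈ W.fam (W.row.get p.2)) ∧
    W.row.get p.2 < W.row.get p.1}

def SubRowTab.LeftAnchored {D : IntervalData n t} {S : Finset (Fin n)}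
    (W : SubRowTab D S) : Prop :=
  ∀ a : Fin n, W.row.head? = some a → ∀ b ∈ W.row, a ≤ b

/-- The concatenation `V(F,I)_1 ∘ ⋯ ∘ V(F,I)_r` of the rows of the tableau
`V(F,I)`, as a list of source indices: each block `I j` in increasing order. -/
def Vlist {r : ℕ} (I : Fin r → Finset (Fin n)) : List (Fin n) :=
  (List.finRange r).flatMap fun j => (I j).sort (· ≤ ·)

/-- Inversions of a list of indices, filled with the type-`e` path family. -/
def invListE (D : IntervalData n t) (l : List (Fin n)) : ℕ :=
  Set.ncard {p : Fin l.length × Fin l.length | p.1 < p.2 ∧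
    PathsIntersect D (l.get p.1) (l.get p.2) ∧ l.get p.2 < l.get p.1}

section Statement11Aux

variable {D : IntervalData n t}

/-! ### Staircase structure of the intervals -/

lemma stair {k l : Fin t} (hne : k ≠ l) (h : D.c k ≤ D.c l) : D.d k < D.d l :=
  lt_of_not_ge fun hc => D.nonnest k l hne ⟨h, hc⟩

lemma c_ne {k l : Fin t} (hne : k ≠ l) : D.c k ≠ D.c l := fun h =>
  lt_asymm (stair hne h.le) (stair hne.symm h.symm.le)

lemma mem_of_between {k : Fin t} {x y z : Fin n} (h1 : D.mem k x) (h2 : D.mem k y)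
    (hxz : x ≤ z) (hzy : z ≤ y) : D.mem k z := ⟨h1.1.trans hxz, hzy.trans h2.2⟩

/-! ### Basic path facts -/

lemma edge_not_from_snk {s : Fin n} {y : V n t} : ¬ Edge D (V.snk s) y := by
  intro h; cases h

lemma pathIn_head {E : V n t → V n t → Prop} {p : List (V n t)} {x y : V n t}
    (h : PathIn E p x y) : ∃ r, p = x :: r := by
  obtain ⟨hne, -, hh, -⟩ := h
  cases p with
  | nil => exact absurd rfl hne
  | cons a r =>
    simp only [List.head?_cons, Option.some.injEq] at hh
    exact ⟨r, by rw [hh]⟩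

lemma pathIn_singleton {E : V n t → V n t → Prop} {z x y : V n t}
    (h : PathIn E [z] x y) : z = x ∧ z = y := by
  obtain ⟨-, -, hh, hl⟩ := h
  simp only [List.head?_cons, Option.some.injEq] at hh
  simp only [List.getLast?_singleton, Option.some.injEq] at hl
  exact ⟨hh, hl⟩

lemma pathIn_tail {E : V n t → V n t → Prop} {a b : V n t} {r : List (V n t)} {y : V n t}
    (h : PathIn E (a :: b :: r) a y) : PathIn E (b :: r) b y ∧ E a b := by
  obtain ⟨-, hc, -, hl⟩ := h
  change List.IsChain _ _ at hc; rw [List.isChain_cons_cons] at hc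
  exact ⟨⟨by simp, hc.2, rfl, by rwa [List.getLast?_cons_cons] at hl⟩, hc.1⟩

lemma pathIn_snk_eq {i s : Fin n} {p : List (V n t)}
    (h : PathIn (Edge D) (V.snk i :: p) (V.snk i) (V.snk s)) : i = s := by
  cases p with
  | nil =>
    have := (pathIn_singleton h).2
    injection this
  | cons b r => exact absurd (pathIn_tail h).2 edge_not_from_snk

/-! ### Structure of paths ending at a sink -/

lemma lastCtr : ∀ (p : List (V n t)) {l : Fin t} {s : Fin n},
    PathIn (Edge D) p (V.ctr l) (V.snk s) →
    ∃ K : Fin t, l ≤ K ∧ D.mem K s ∧ ∀ m, K < m → ¬ D.mem m s := by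
  intro p
  induction p with
  | nil => intro l s h; exact absurd rfl h.1
  | cons a rest ih =>
    intro l s h
    obtain ⟨r, hr⟩ := pathIn_head h
    obtain ⟨rfl, rfl⟩ : a = V.ctr l ∧ rest = r := by
      injection hr with h1 h2; exact ⟨h1, h2⟩
    cases rest with
    | nil =>
      have := (pathIn_singleton h).2
      exact absurd this (by simp)
    | cons b r' =>
      obtain ⟨hp', he⟩ := pathIn_tail h
      cases he with
      | ctrSnk i _ hmem hmax =>
        have : i = s := pathIn_snk_eq hp'
        subst this
        exact ⟨l, le_refl _, hmem, hmax⟩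
      | ctrCtr x _ l' hkl h1 h2 hgap =>
        obtain ⟨K, hK1, hK2, hK3⟩ := ih hp'
        exact ⟨K, (hkl.trans_le hK1).le, hK2, hK3⟩

lemma kmax_unique {s : Fin n} {K K' : Fin t} (h1 : D.mem K s) (h2 : ∀ m, K < m → ¬ D.mem m s)
    (h3 : D.mem K' s) (h4 : ∀ m, K' < m → ¬ D.mem m s) : K = K' :=
  le_antisymm (not_lt.mp fun h => h4 _ h h1) (not_lt.mp fun h => h2 _ h h3)

lemma dirM : ∀ (r : List (V n t)) {k l : Fin t} {s : Fin n} {K : Fin t},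
    PathIn (Edge D) (V.ctr k :: V.ctr l :: r) (V.ctr k) (V.snk s) →
    D.mem K s → (∀ m, K < m → ¬ D.mem m s) →
    (D.c k < D.c l ↔ D.c k < D.c K) := by
  intro r
  induction r with
  | nil =>
    intro k l s K h _ _
    have := h.2.2.2
    rw [List.getLast?_cons_cons, List.getLast?_singleton] at this
    exact absurd this (by simp)
  | cons b r' ih =>
    intro k l s K h hK hKmax
    obtain ⟨h2, hekl⟩ := pathIn_tail h
    obtain ⟨h3, helb⟩ := pathIn_tail h2
    -- witness of the first edge: needed for tripleOverlap and the base case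
    cases helb with
    | ctrSnk i _ hmem hmax =>
      have : i = s := pathIn_snk_eq h3
      subst this
      have : l = K := kmax_unique hmem hmax hK hKmax
      rw [this]
    | ctrCtr x₂ _ m₂ hlm2 hx2l hx2m2 hgap2 =>
      have iH : D.c l < D.c m₂ ↔ D.c l < D.c K := ih h2 hK hKmax
      -- K ≥ m₂ > l, in particular K ≠ l
      obtain ⟨K', hm2K', hK'1, hK'2⟩ := lastCtr _ h3
      have hKK' : K = K' := kmax_unique hK hKmax hK'1 hK'2
      have hlK : l < K := by
        rw [hKK']; exact hlm2.trans_le hm2K'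
      -- witness of edge k → l
      cases hekl with
      | ctrCtr x₁ _ _ hkl hx1k hx1l hgap1 =>
        rcases D.tripleOverlap k l m₂ hkl hlm2
            ⟨hx1k.1.trans hx1l.2, hx1l.1.trans hx1k.2⟩
            ⟨hx2l.1.trans hx2m2.2, hx2m2.1.trans hx2l.2⟩ with ⟨h1, h2'⟩ | ⟨h1, h2'⟩
        · have hlcK : D.c l < D.c K := iH.mp h2'
          constructor
          · intro _; exact h1.trans hlcK
          · intro _; exact h1
        · have : ¬ D.c l < D.c K := fun hc => absurd (iH.mpr hc) (not_lt.mpr h1.le)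
          have hKl : D.c K < D.c l :=
            lt_of_le_of_ne (not_lt.mp this) (c_ne (ne_of_gt hlK))
          constructor
          · intro hc; exact absurd hc (not_lt.mpr h2'.le)
          · intro hc; exact absurd (hc.trans hKl) (not_lt.mpr h2'.le)

lemma next_unique_lt {k l l' : Fin t} {p q : List (V n t)} {s : Fin n}
    (hkl : Edge D (V.ctr k) (V.ctr l)) (hkl' : Edge D (V.ctr k) (V.ctr l'))
    (hp : PathIn (Edge D) (V.ctr l :: p) (V.ctr l) (V.snk s))
    (hq : PathIn (Edge D) (V.ctr l' :: q) (V.ctr l') (V.snk s))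
    (hll : l < l') : False := by
  obtain ⟨K, hlK, hKs, hKmax⟩ := lastCtr _ hp
  obtain ⟨K', hl'K', hK's, hK'max⟩ := lastCtr _ hq
  have hKK : K' = K := kmax_unique hK's hK'max hKs hKmax
  subst hKK
  have hpk : PathIn (Edge D) (V.ctr k :: V.ctr l :: p) (V.ctr k) (V.snk s) :=
    ⟨by simp, List.isChain_cons_cons.mpr ⟨hkl, hp.2.1⟩, rfl,
      by rw [List.getLast?_cons_cons]; exact hp.2.2.2⟩
  have hqk : PathIn (Edge D) (V.ctr k :: V.ctr l' :: q) (V.ctr k) (V.snk s) :=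
    ⟨by simp, List.isChain_cons_cons.mpr ⟨hkl', hq.2.1⟩, rfl,
      by rw [List.getLast?_cons_cons]; exact hq.2.2.2⟩
  have d1 : D.c k < D.c l ↔ D.c k < D.c K' := dirM _ hpk hK's hK'max
  have d2 : D.c k < D.c l' ↔ D.c k < D.c K' := dirM _ hqk hK's hK'max
  cases hkl with
  | ctrCtr x _ _ hklt hxk hxl hgx =>
    cases hkl' with
    | ctrCtr x' _ _ hkl't hx'k hx'l' hgx' =>
      have hxl' : ¬ D.mem l x' := hgx' l hklt hll
      by_cases hint : D.c l ≤ D.d l' ∧ D.c l' ≤ D.d l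
      · rcases D.tripleOverlap k l l' hklt hll
            ⟨hxk.1.trans hxl.2, hxl.1.trans hxk.2⟩ hint with ⟨h1, h2⟩ | ⟨h1, h2⟩
        · exact hxl' ⟨(h2.trans_le hx'l'.1).le,
            (hx'k.2.trans_lt (stair (ne_of_lt hklt) h1.le)).le⟩
        · exact hxl' ⟨(h2.trans_le hx'k.1).le,
            (hx'l'.2.trans_lt (stair (ne_of_gt hll) h1.le)).le⟩
      · rw [not_and_or, not_le, not_le] at hint
        rcases lt_or_gt_of_ne (c_ne (ne_of_lt hklt)) with hdir | hdir
        · have hdir' : D.c k < D.c l' := d2.mpr (d1.mp hdir)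
          rcases hint with hsep | hsep
          · -- d l' < c l
            have : D.d k < D.d l' := stair (ne_of_lt hkl't) hdir'.le
            exact absurd ((hxl.1.trans hxk.2).trans_lt this) (not_lt.mpr hsep.le)
          · -- d l < c l'
            have : D.d k < D.d l := stair (ne_of_lt hklt) hdir.le
            exact absurd ((hx'l'.1.trans hx'k.2).trans_lt this) (not_lt.mpr hsep.le)
        · have hdir' : D.c l' < D.c k := by
            have : ¬ D.c k < D.c l' := fun hc => absurd (d1.mpr (d2.mp hc)) (not_lt.mpr hdir.le)
            exact lt_of_le_of_ne (not_lt.mp this) (c_ne (ne_of_lt hkl't)).symm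
          rcases hint with hsep | hsep
          · -- d l' < c l
            exact absurd (((hx'k.1.trans hx'l'.2).trans_lt hsep).trans hdir) (lt_irrefl _)
          · -- d l < c l'
            exact absurd (((hxk.1.trans hxl.2).trans_lt hsep).trans hdir') (lt_irrefl _)

lemma next_vertex_unique {x y y' : V n t} {p q : List (V n t)} {s : Fin n}
    (e1 : Edge D x y) (e2 : Edge D x y')
    (hp : PathIn (Edge D) (y :: p) y (V.snk s)) (hq : PathIn (Edge D) (y' :: q) y' (V.snk s)) :
    y = y' := by
  cases e1 with
  | srcCtr a k hk hkmin =>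
    cases e2 with
    | srcCtr _ k' hk' hk'min =>
      have : k = k' :=
        le_antisymm (not_lt.mp fun h => hkmin _ h hk') (not_lt.mp fun h => hk'min _ h hk)
      rw [this]
    | srcSnk _ hno => exact absurd hk (hno k)
  | srcSnk a hno =>
    cases e2 with
    | srcCtr _ k hk _ => exact absurd hk (hno k)
    | srcSnk _ _ => rfl
  | ctrSnk i k hk hkmax =>
    have his : i = s := pathIn_snk_eq hp
    subst his
    cases e2 with
    | ctrSnk i' _ hk' hk'max =>
      have : i' = i := pathIn_snk_eq hq
      rw [this]
    | ctrCtr x₀ _ l' hkl' h1 h2 hg =>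
      obtain ⟨K, hlK, hKs, hKmax⟩ := lastCtr _ hq
      exact absurd hKs (hkmax K (hkl'.trans_le hlK))
  | ctrCtr x₀ k l hkl h1 h2 hg =>
    cases e2 with
    | ctrSnk i' _ hk' hk'max =>
      have his : i' = s := pathIn_snk_eq hq
      subst his
      obtain ⟨K, hlK, hKs, hKmax⟩ := lastCtr _ hp
      exact absurd hKs (hk'max K (hkl.trans_le hlK))
    | ctrCtr x₀' _ l' hkl' h1' h2' hg' =>
      rcases lt_trichotomy l l' with h | h | h
      · exact absurd h (fun h =>
          next_unique_lt (Edge.ctrCtr x₀ k l hkl h1 h2 hg)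
            (Edge.ctrCtr x₀' k l' hkl' h1' h2' hg') hp hq h)
      · rw [h]
      · exact absurd h (fun h =>
          next_unique_lt (Edge.ctrCtr x₀' k l' hkl' h1' h2' hg')
            (Edge.ctrCtr x₀ k l hkl h1 h2 hg) hq hp h)

lemma path_unique_aux : ∀ (N : ℕ) (p q : List (V n t)) (x : V n t) (s : Fin n),
    p.length ≤ N → PathIn (Edge D) p x (V.snk s) → PathIn (Edge D) q x (V.snk s) → p = q := by
  intro N
  induction N with
  | zero =>
    intro p q x s hlen hp _
    obtain ⟨r, rfl⟩ := pathIn_head hp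
    simp at hlen
  | succ N ih =>
    intro p q x s hlen hp hq
    obtain ⟨p', rfl⟩ := pathIn_head hp
    obtain ⟨q', rfl⟩ := pathIn_head hq
    cases p' with
    | nil =>
      have hx : x = V.snk s := (pathIn_singleton hp).2
      subst hx
      cases q' with
      | nil => rfl
      | cons b q'' => exact absurd (pathIn_tail hq).2 edge_not_from_snk
    | cons y p'' =>
      cases q' with
      | nil =>
        have hx : x = V.snk s := (pathIn_singleton hq).2
        subst hx
        exact absurd (pathIn_tail hp).2 edge_not_from_snk
      | cons y' q'' =>
        obtain ⟨hp2, he1⟩ := pathIn_tail hp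
        obtain ⟨hq2, he2⟩ := pathIn_tail hq
        have hyy : y = y' := next_vertex_unique he1 he2 hp2 hq2
        subst hyy
        have : (y :: p'') = (y :: q'') := by
          refine ih _ _ y s ?_ hp2 hq2
          simpa using Nat.succ_le_succ_iff.mp hlen
        rw [this]

lemma path_unique {p q : List (V n t)} {x : V n t} {s : Fin n}
    (hp : PathIn (Edge D) p x (V.snk s)) (hq : PathIn (Edge D) q x (V.snk s)) : p = q :=
  path_unique_aux p.length p q x s le_rfl hp hq

/-! ### The position (sweep) function of a path -/

noncomputable def wit (D : IntervalData n t) (y : Fin n) (k l : Fin t) : Fin n :=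
  if h : ∃ x : Fin n, D.mem k x ∧ D.mem l x ∧ ∀ m, k < m → m < l → ¬ D.mem m x then
    h.choose else y

lemma wit_spec {k l : Fin t} (h : Edge D (V.ctr k) (V.ctr l)) (y : Fin n) :
    D.mem k (wit D y k l) ∧ D.mem l (wit D y k l) ∧
      ∀ m, k < m → m < l → ¬ D.mem m (wit D y k l) := by
  cases h with
  | ctrCtr x _ _ hkl h1 h2 hg =>
    have hex : ∃ x : Fin n, D.mem k x ∧ D.mem l x ∧ ∀ m, k < m → m < l → ¬ D.mem m x :=
      ⟨x, h1, h2, hg⟩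
    rw [wit, dif_pos hex]
    exact hex.choose_spec

noncomputable def nextCarry (D : IntervalData n t) (y : Fin n) (k : Fin t) :
    List (V n t) → Fin n
  | V.ctr l :: _ => wit D y k l
  | V.snk s :: _ => s
  | _ => y

lemma nextCarry_ctr (y : Fin n) (k l : Fin t) (rest : List (V n t)) :
    nextCarry D y k (V.ctr l :: rest) = wit D y k l := rfl

lemma nextCarry_snk (y : Fin n) (k : Fin t) (s : Fin n) (rest : List (V n t)) :
    nextCarry D y k (V.snk s :: rest) = s := rfl

noncomputable def posC (D : IntervalData n t) : List (V n t) → Fin n → ℕ → Fin n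
  | V.ctr k :: rest, y, τ =>
      if τ ≤ (k : ℕ) then y else posC D rest (nextCarry D y k rest) τ
  | _, y, _ => y

lemma posC_ctr (k : Fin t) (rest : List (V n t)) (y : Fin n) (τ : ℕ) :
    posC D (V.ctr k :: rest) y τ =
      if τ ≤ (k : ℕ) then y else posC D rest (nextCarry D y k rest) τ := rfl

lemma posC_snk (s : Fin n) (rest : List (V n t)) (y : Fin n) (τ : ℕ) :
    posC D (V.snk s :: rest) y τ = y := rfl

lemma posC_zero (rest : List (V n t)) (y : Fin n) : posC D rest y 0 = y := by
  cases rest with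
  | nil => rfl
  | cons a r =>
    cases a with
    | src => rfl
    | snk => rfl
    | ctr k => rw [posC_ctr, if_pos (Nat.zero_le _)]

/-- Shape invariant for the tail of a path. -/
def SH (y : Fin n) : List (V n t) → Prop
  | V.snk s :: _ => y = s
  | V.ctr _ :: _ => True
  | _ => False

lemma posC_last : ∀ (rest : List (V n t)) (y : Fin n) {s : Fin n},
    List.Chain' (Edge D) rest → rest.getLast? = some (V.snk s) → SH y rest →
    ∀ τ : ℕ, t ≤ τ → posC D rest y τ = s := by
  intro rest
  induction rest with
  | nil => intro y s _ _ hsh; exact absurd hsh (by simp [SH])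
  | cons a rest' ih =>
    intro y s hch hlast hsh τ hτ
    cases a with
    | src => exact absurd hsh (by simp [SH])
    | snk s' =>
      cases rest' with
      | nil =>
        have : V.snk s' = V.snk (n := n) (t := t) s := by
          simpa using hlast
        injection this with h
        rw [posC_snk]
        exact hsh.trans h
      | cons b r'' =>
        change List.IsChain _ _ at hch; rw [List.isChain_cons_cons] at hch
        exact absurd hch.1 edge_not_from_snk
    | ctr k =>
      cases rest' with
      | nil =>
        have : V.ctr (n := n) k = V.snk (n := n) s := by simpa using hlast
        exact absurd this (by simp)
      | cons b r'' =>
        change List.IsChain _ _ at hch; rw [List.isChain_cons_cons] at hch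
        have hkτ : ¬ τ ≤ (k : ℕ) := by have := k.isLt; omega
        rw [posC_ctr, if_neg hkτ]
        have hlast' : (b :: r'').getLast? = some (V.snk s) := by
          rwa [List.getLast?_cons_cons] at hlast
        refine ih (nextCarry D y k (b :: r'')) hch.2 hlast' ?_ τ hτ
        cases b with
        | src a => exact absurd hch.1 (by intro h; cases h)
        | snk s'' => simp [nextCarry, SH]
        | ctr l => simp [nextCarry, SH]

/-- Invariant carried along the sweep. -/
def HY (D : IntervalData n t) (y : Fin n) (b : ℕ) : List (V n t) → Prop
  | V.snk s' :: _ => y = s' ∧ ∀ m : Fin t, b ≤ (m : ℕ) → ¬ D.mem m y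
  | V.ctr k :: _ => b ≤ (k : ℕ) ∧ D.mem k y ∧
      ∀ m : Fin t, b ≤ (m : ℕ) → (m : ℕ) < (k : ℕ) → ¬ D.mem m y
  | _ => False

lemma posC_main : ∀ (rest : List (V n t)) (y : Fin n) (b : ℕ) {s : Fin n},
    List.Chain' (Edge D) rest → rest.getLast? = some (V.snk s) → HY D y b rest →
    ∀ (τ : ℕ), b ≤ τ → ∀ (hτ : τ < t),
      (posC D rest y τ ≠ posC D rest y (τ + 1) →
        V.ctr ⟨τ, hτ⟩ ∈ rest ∧ D.mem ⟨τ, hτ⟩ (posC D rest y τ) ∧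
          D.mem ⟨τ, hτ⟩ (posC D rest y (τ + 1))) ∧
      (posC D rest y τ = posC D rest y (τ + 1) →
        V.ctr ⟨τ, hτ⟩ ∈ rest ∨ ¬ D.mem ⟨τ, hτ⟩ (posC D rest y τ)) := by
  intro rest
  induction rest with
  | nil => intro y b s _ _ hHY; exact absurd hHY (by simp [HY])
  | cons a rest' ih =>
    intro y b s hch hlast hHY τ hbτ hτ
    cases a with
    | src => exact absurd hHY (by simp [HY])
    | snk s' =>
      rw [posC_snk]
      refine ⟨fun h => absurd rfl h, fun _ => Or.inr ?_⟩
      exact hHY.2 ⟨τ, hτ⟩ hbτ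
    | ctr k =>
      obtain ⟨hbk, hky, hmin⟩ := hHY
      cases rest' with
      | nil =>
        have : V.ctr (n := n) k = V.snk (n := n) s := by simpa using hlast
        exact absurd this (by simp)
      | cons bb rest'' =>
        change List.IsChain _ _ at hch; rw [List.isChain_cons_cons] at hch
        have hlast' : (bb :: rest'').getLast? = some (V.snk s) := by
          rwa [List.getLast?_cons_cons] at hlast
        rcases Nat.lt_trichotomy τ (k : ℕ) with hlt | heq | hgt
        · have e1 : posC D (V.ctr k :: bb :: rest'') y τ = y := by
            rw [posC_ctr, if_pos hlt.le]
          have e2 : posC D (V.ctr k :: bb :: rest'') y (τ + 1) = y := by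
            rw [posC_ctr, if_pos (by omega : τ + 1 ≤ (k : ℕ))]
          rw [e1, e2]
          exact ⟨fun h => absurd rfl h, fun _ => Or.inr (hmin ⟨τ, hτ⟩ hbτ hlt)⟩
        · have e1 : posC D (V.ctr k :: bb :: rest'') y τ = y := by
            rw [posC_ctr, if_pos heq.le]
          have hmemc : D.mem k (nextCarry D y k (bb :: rest'')) ∧
              posC D (V.ctr k :: bb :: rest'') y (τ + 1) =
                nextCarry D y k (bb :: rest'') := by
            cases bb with
            | src => exact absurd hch.1 (by intro h; cases h)
            | ctr l =>
              have hkl : k < l := by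
                cases hch.1 with
                | ctrCtr x _ _ hkl _ _ _ => exact hkl
              have hkl' : (k : ℕ) < (l : ℕ) := hkl
              constructor
              · exact (wit_spec hch.1 y).1
              · rw [posC_ctr, if_neg (by omega), nextCarry_ctr, posC_ctr, if_pos (by omega)]
            | snk s'' =>
              have hmem : D.mem k s'' := by
                cases hch.1 with
                | ctrSnk _ _ hm _ => exact hm
              constructor
              · exact hmem
              · rw [posC_ctr, if_neg (by omega), nextCarry_snk, posC_snk]
          have hfin : (⟨τ, hτ⟩ : Fin t) = k := Fin.ext heq
          rw [e1, hmemc.2, hfin]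
          refine ⟨fun _ => ⟨List.mem_cons_self, hky, hmemc.1⟩,
            fun _ => Or.inl (List.mem_cons_self)⟩
        · have e1 : posC D (V.ctr k :: bb :: rest'') y τ =
              posC D (bb :: rest'') (nextCarry D y k (bb :: rest'')) τ := by
            rw [posC_ctr, if_neg (by omega)]
          have e2 : posC D (V.ctr k :: bb :: rest'') y (τ + 1) =
              posC D (bb :: rest'') (nextCarry D y k (bb :: rest'')) (τ + 1) := by
            rw [posC_ctr, if_neg (by omega)]
          have hHY' : HY D (nextCarry D y k (bb :: rest'')) ((k : ℕ) + 1) (bb :: rest'') := by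
            cases bb with
            | src => exact absurd hch.1 (by intro h; cases h)
            | ctr l =>
              have hw := wit_spec hch.1 y
              have hkl : k < l := by
                cases hch.1 with
                | ctrCtr x _ _ hkl _ _ _ => exact hkl
              have hkl' : (k : ℕ) < (l : ℕ) := hkl
              rw [nextCarry_ctr]
              refine ⟨by omega, hw.2.1, ?_⟩
              intro m hm1 hm2
              exact hw.2.2 m (Fin.lt_def.mpr (by omega)) (Fin.lt_def.mpr hm2)
            | snk s'' =>
              have hmax : ∀ l, k < l → ¬ D.mem l s'' := by
                cases hch.1 with
                | ctrSnk _ _ _ hmax => exact hmax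
              rw [nextCarry_snk]
              exact ⟨rfl, fun m hm => hmax m (Fin.lt_def.mpr (by omega))⟩
          have key := ih (nextCarry D y k (bb :: rest'')) ((k : ℕ) + 1)
            hch.2 hlast' hHY' τ (by omega) hτ
          rw [e1, e2]
          refine ⟨fun h => ?_, fun h => ?_⟩
          · obtain ⟨h1, h2, h3⟩ := key.1 h
            exact ⟨List.mem_cons_of_mem _ h1, h2, h3⟩
          · rcases key.2 h with h1 | h1
            · exact Or.inl (List.mem_cons_of_mem _ h1)
            · exact Or.inr h1

lemma src_setup {p : List (V n t)} {a s : Fin n}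
    (h : PathIn (Edge D) (V.src a :: p) (V.src a) (V.snk s)) :
    List.Chain' (Edge D) p ∧ p.getLast? = some (V.snk s) ∧ HY D a 0 p ∧ SH a p := by
  cases p with
  | nil =>
    have := (pathIn_singleton h).2
    exact absurd this (by simp)
  | cons b p' =>
    obtain ⟨h2, he⟩ := pathIn_tail h
    refine ⟨?_, h2.2.2.2, ?_, ?_⟩
    · exact h2.2.1
    · cases he with
      | srcCtr _ k hk hkmin =>
        exact ⟨Nat.zero_le _, hk, fun m _ hm => hkmin m (Fin.lt_def.mpr hm)⟩
      | srcSnk _ hno => exact ⟨rfl, fun m _ => hno m⟩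
    · cases he with
      | srcCtr _ k hk hkmin => trivial
      | srcSnk _ hno => exact rfl

lemma crossing {pA pB : List (V n t)} {A B sA sB : Fin n}
    (hA : PathIn (Edge D) pA (V.src A) (V.snk sA))
    (hB : PathIn (Edge D) pB (V.src B) (V.snk sB))
    (hBA : B < A) (hs : sA < sB) : ∃ x, x ∈ pA ∧ x ∈ pB := by
  by_contra hcon
  push_neg at hcon
  obtain ⟨rA, rfl⟩ := pathIn_head hA
  obtain ⟨rB, rfl⟩ := pathIn_head hB
  obtain ⟨chA, lastA, hyA, shA⟩ := src_setup hA
  obtain ⟨chB, lastB, hyB, shB⟩ := src_setup hB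
  have step : ∀ τ, τ < t → posC D rB B τ < posC D rA A τ →
      posC D rB B (τ + 1) < posC D rA A (τ + 1) := by
    intro τ hτ hlt
    by_contra hge
    push_neg at hge
    have mA := posC_main rA A 0 chA lastA hyA τ (Nat.zero_le _) hτ
    have mB := posC_main rB B 0 chB lastB hyB τ (Nat.zero_le _) hτ
    by_cases hfj : posC D rA A τ = posC D rA A (τ + 1)
    · by_cases hgj : posC D rB B τ = posC D rB B (τ + 1)
      · rw [← hfj, ← hgj] at hge
        exact absurd hlt (not_lt.mpr hge)
      · obtain ⟨hmem, hm1, hm2⟩ := mB.1 hgj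
        have hmx : D.mem ⟨τ, hτ⟩ (posC D rA A τ) :=
          mem_of_between hm1 hm2 hlt.le (hfj ▸ hge)
        rcases mA.2 hfj with hin | hnm
        · exact hcon _ (List.mem_cons_of_mem _ hin) (List.mem_cons_of_mem _ hmem)
        · exact hnm hmx
    · obtain ⟨hmemA, ha1, ha2⟩ := mA.1 hfj
      by_cases hgj : posC D rB B τ = posC D rB B (τ + 1)
      · have hmz : D.mem ⟨τ, hτ⟩ (posC D rB B τ) :=
          mem_of_between ha2 ha1 (hgj ▸ hge) hlt.le
        rcases mB.2 hgj with hin | hnm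
        · exact hcon _ (List.mem_cons_of_mem _ hmemA) (List.mem_cons_of_mem _ hin)
        · exact hnm hmz
      · obtain ⟨hmemB, -, -⟩ := mB.1 hgj
        exact hcon _ (List.mem_cons_of_mem _ hmemA) (List.mem_cons_of_mem _ hmemB)
  have all : ∀ τ, τ ≤ t → posC D rB B τ < posC D rA A τ := by
    intro τ
    induction τ with
    | zero => intro _; rw [posC_zero, posC_zero]; exact hBA
    | succ τ ihτ =>
      intro hle
      exact step τ (by omega) (ihτ (by omega))
  have hend := all t le_rfl
  rw [posC_last rA A chA lastA shA t le_rfl, posC_last rB B chB lastB shB t le_rfl] at hend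
  exact absurd hs (not_lt.mpr hend.le)

/-! ### Splicing two crossing paths -/

lemma infix_split {α : Type*} {a b x : α} : ∀ {L M : List α},
    [a, b] <:+: (L ++ x :: M) → [a, b] <:+: (L ++ [x]) ∨ [a, b] <:+: (x :: M) := by
  intro L
  induction L with
  | nil => intro M h; exact Or.inr h
  | cons c L' ihL =>
    intro M h
    rw [List.cons_append] at h
    rcases List.infix_cons_iff.mp h with hpre | hinf
    · obtain ⟨r, hr⟩ := hpre
      rw [List.cons_append] at hr
      obtain ⟨rfl, hr2⟩ : a = c ∧ b :: r = L' ++ x :: M := by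
        injection hr with h1 h2; exact ⟨h1, h2⟩
      cases L' with
      | nil =>
        obtain ⟨rfl, -⟩ : b = x ∧ r = M := by
          rw [List.nil_append] at hr2
          injection hr2 with h1 h2; exact ⟨h1, h2⟩
        exact Or.inl (by simpa using List.infix_refl [c, x])
      | cons e L'' =>
        obtain ⟨rfl, -⟩ : b = e ∧ r = L'' ++ x :: M := by
          rw [List.cons_append] at hr2
          injection hr2 with h1 h2; exact ⟨h1, h2⟩
        left
        refine List.IsPrefix.isInfix ⟨L'' ++ [x], ?_⟩
        simp
    · rcases ihL hinf with h1 | h1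
      · exact Or.inl (List.infix_cons h1)
      · exact Or.inr h1

lemma splice {p q : List (V n t)} {a b sa sb : Fin n} {k : Fin t}
    (hp : PathIn (Edge D) p (V.src a) (V.snk sa))
    (hq : PathIn (Edge D) q (V.src b) (V.snk sb))
    (hxp : V.ctr k ∈ p) (hxq : V.ctr k ∈ q) :
    ∃ p' q', PathIn (Edge D) p' (V.src a) (V.snk sb) ∧
      PathIn (Edge D) q' (V.src b) (V.snk sa) ∧
      V.ctr k ∈ p' ∧ V.ctr k ∈ q' ∧
      (∀ y z : V n t, [y, z] <:+: p → [y, z] <:+: p' ∨ [y, z] <:+: q') ∧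
      (∀ y z : V n t, [y, z] <:+: q → [y, z] <:+: p' ∨ [y, z] <:+: q') := by
  obtain ⟨p₁, p₂, rfl⟩ := List.append_of_mem hxp
  obtain ⟨q₁, q₂, rfl⟩ := List.append_of_mem hxq
  have hp₁ : p₁ ≠ [] := by
    rintro rfl
    have := hp.2.2.1
    simp only [List.nil_append, List.head?_cons, Option.some.injEq] at this
    exact absurd this (by simp)
  have hq₁ : q₁ ≠ [] := by
    rintro rfl
    have := hq.2.2.1
    simp only [List.nil_append, List.head?_cons, Option.some.injEq] at this
    exact absurd this (by simp)
  have hpch := (List.isChain_append).mp hp.2.1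
  have hqch := (List.isChain_append).mp hq.2.1
  have hphead : p₁.head? = some (V.src a) := by
    have := hp.2.2.1
    rwa [List.head?_append_of_ne_nil _ hp₁] at this
  have hqhead : q₁.head? = some (V.src b) := by
    have := hq.2.2.1
    rwa [List.head?_append_of_ne_nil _ hq₁] at this
  have hplast : (V.ctr k :: p₂).getLast? = some (V.snk sa) := by
    have := hp.2.2.2
    rwa [List.getLast?_append_cons] at this
  have hqlast : (V.ctr k :: q₂).getLast? = some (V.snk sb) := by
    have := hq.2.2.2
    rwa [List.getLast?_append_cons] at this
  refine ⟨p₁ ++ V.ctr k :: q₂, q₁ ++ V.ctr k :: p₂, ?_, ?_, ?_, ?_, ?_, ?_⟩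
  · refine ⟨by simp, ?_, ?_, ?_⟩
    · refine List.isChain_append.mpr ⟨hpch.1, hqch.2.1, fun x hx y hy => hpch.2.2 x hx y ?_⟩
      have hyk : V.ctr k = y := by simpa using hy
      simp only [List.head?_cons, Option.mem_def, Option.some.injEq]
      exact hyk
    · rw [List.head?_append_of_ne_nil _ hp₁]; exact hphead
    · rw [List.getLast?_append_cons]; exact hqlast
  · refine ⟨by simp, ?_, ?_, ?_⟩
    · refine List.isChain_append.mpr ⟨hqch.1, hpch.2.1, fun x hx y hy => hqch.2.2 x hx y ?_⟩
      have hyk : V.ctr k = y := by simpa using hy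
      simp only [List.head?_cons, Option.mem_def, Option.some.injEq]
      exact hyk
    · rw [List.head?_append_of_ne_nil _ hq₁]; exact hqhead
    · rw [List.getLast?_append_cons]; exact hplast
  · exact List.mem_append.mpr (Or.inr (List.mem_cons_self))
  · exact List.mem_append.mpr (Or.inr (List.mem_cons_self))
  · intro y z hyz
    rcases infix_split hyz with h1 | h1
    · left
      refine h1.trans ?_
      refine List.IsPrefix.isInfix ⟨q₂, ?_⟩
      simp
    · right
      exact h1.trans (List.suffix_append _ _).isInfix
  · intro y z hyz
    rcases infix_split hyz with h1 | h1
    · right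
      refine h1.trans ?_
      refine List.IsPrefix.isInfix ⟨p₂, ?_⟩
      simp
    · left
      exact h1.trans (List.suffix_append _ _).isInfix

/-! ### Every common vertex of two distinct-endpoint paths is central -/

lemma tail_is_target : ∀ (p : List (V n t)), List.Chain' (Edge D) p →
    ∀ x ∈ p.tail, ∃ w, Edge D w x := by
  intro p
  induction p with
  | nil => intro _ x hx; simp at hx
  | cons c l ih =>
    intro hch x hx
    cases l with
    | nil => simp at hx
    | cons e r =>
      change List.IsChain _ _ at hch; rw [List.isChain_cons_cons] at hch
      rcases List.mem_cons.mp hx with rfl | hx'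
      · exact ⟨c, hch.1⟩
      · exact ih hch.2 x hx'

lemma snk_mem_eq : ∀ (p : List (V n t)) {z : V n t} {s i : Fin n},
    PathIn (Edge D) p z (V.snk s) → V.snk i ∈ p → i = s := by
  intro p
  induction p with
  | nil => intro z s i _ hm; simp at hm
  | cons c l ih =>
    intro z s i hp hm
    obtain ⟨r, hr⟩ := pathIn_head hp
    obtain ⟨rfl, rfl⟩ : c = z ∧ l = r := by injection hr with h1 h2; exact ⟨h1, h2⟩
    rcases List.mem_cons.mp hm with heq | hm'
    · subst heq
      exact pathIn_snk_eq hp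
    · cases l with
      | nil => simp at hm'
      | cons e r' => exact ih (pathIn_tail hp).1 hm'

lemma mem_path_shape {p : List (V n t)} {a s : Fin n}
    (hp : PathIn (Edge D) p (V.src a) (V.snk s)) :
    ∀ x ∈ p, x = V.src a ∨ x = V.snk s ∨ ∃ k, x = V.ctr k := by
  intro x hx
  cases x with
  | src a' =>
    obtain ⟨r, rfl⟩ := pathIn_head hp
    rcases List.mem_cons.mp hx with heq | hx'
    · exact Or.inl heq
    · obtain ⟨w, hw⟩ := tail_is_target _ hp.2.1 _ hx'
      cases hw
  | snk s' =>
    have := snk_mem_eq p hp hx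
    exact Or.inr (Or.inl (by rw [this]))
  | ctr k => exact Or.inr (Or.inr ⟨k, rfl⟩)

lemma common_is_ctr {p q : List (V n t)} {a b sa sb : Fin n}
    (hp : PathIn (Edge D) p (V.src a) (V.snk sa))
    (hq : PathIn (Edge D) q (V.src b) (V.snk sb))
    (hab : a ≠ b) (hsab : sa ≠ sb) {x : V n t} (hxp : x ∈ p) (hxq : x ∈ q) :
    ∃ k, x = V.ctr k := by
  rcases mem_path_shape hp x hxp with rfl | rfl | h
  · rcases mem_path_shape hq _ hxq with h' | h' | ⟨k, h'⟩
    · injection h' with h''; exact absurd h'' hab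
    · exact absurd h' (by simp)
    · exact absurd h' (by simp)
  · rcases mem_path_shape hq _ hxq with h' | h' | ⟨k, h'⟩
    · exact absurd h' (by simp)
    · injection h' with h''; exact absurd h'' hsab
    · exact absurd h' (by simp)
  · exact h

/-! ### The exchange construction -/

lemma exchange_family {fam : Fin n → List (V n t)} {u v : Equiv.Perm (Fin n)} {i j : Fin n}
    (hfam : ∀ m, IsPathFromTo D (fam (u m)) (u m) (v m)) (hcov : Covers D fam)
    (hij : i ≠ j)
    (hint : ∃ x, x ∈ fam (u i) ∧ x ∈ fam (u j)) :
    ∃ ρ : Fin n → List (V n t),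
      (∀ m, IsPathFromTo D (ρ (u m)) (u m) ((v * Equiv.swap i j) m)) ∧ Covers D ρ := by
  classical
  obtain ⟨x, hx1, hx2⟩ := hint
  have hab : u i ≠ u j := fun h => hij (u.injective h)
  have hvij : v i ≠ v j := fun h => hij (v.injective h)
  obtain ⟨k, rfl⟩ := common_is_ctr (hfam i) (hfam j) hab hvij hx1 hx2
  obtain ⟨p', q', hp', hq', -, -, htp, htq⟩ := splice (hfam i) (hfam j) hx1 hx2
  refine ⟨Function.update (Function.update fam (u i) p') (u j) q', ?_, ?_⟩
  · intro m
    by_cases hmi : m = i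
    · rw [hmi, Function.update_of_ne hab, Function.update_self]
      have : (v * Equiv.swap i j) i = v j := by
        rw [Equiv.Perm.mul_apply, Equiv.swap_apply_left]
      rw [this]
      exact hp'
    · by_cases hmj : m = j
      · rw [hmj, Function.update_self]
        have : (v * Equiv.swap i j) j = v i := by
          rw [Equiv.Perm.mul_apply, Equiv.swap_apply_right]
        rw [this]
        exact hq'
      · have h1 : u m ≠ u j := fun h => hmj (u.injective h)
        have h2 : u m ≠ u i := fun h => hmi (u.injective h)
        rw [Function.update_of_ne h1, Function.update_of_ne h2]
        have : (v * Equiv.swap i j) m = v m := by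
          rw [Equiv.Perm.mul_apply, Equiv.swap_apply_of_ne_of_ne hmi hmj]
        rw [this]
        exact hfam m
  · intro y z he
    obtain ⟨i₀, hi₀⟩ := hcov y z he
    by_cases h1 : i₀ = u i
    · subst h1
      rcases htp y z hi₀ with h | h
      · exact ⟨u i, by rw [Function.update_of_ne hab, Function.update_self]; exact h⟩
      · exact ⟨u j, by rw [Function.update_self]; exact h⟩
    · by_cases h2 : i₀ = u j
      · subst h2
        rcases htq y z hi₀ with h | h
        · exact ⟨u i, by rw [Function.update_of_ne hab, Function.update_self]; exact h⟩
        · exact ⟨u j, by rw [Function.update_self]; exact h⟩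
      · exact ⟨i₀, by rw [Function.update_of_ne h2, Function.update_of_ne h1]; exact hi₀⟩

lemma int_of_exchange {fam ρ : Fin n → List (V n t)} {u v : Equiv.Perm (Fin n)} {i j : Fin n}
    (hfam : ∀ m, IsPathFromTo D (fam (u m)) (u m) (v m))
    (hρ : ∀ m, IsPathFromTo D (ρ (u m)) (u m) ((v * Equiv.swap i j) m))
    (hij : i ≠ j) (hu : u j < u i) (hv : v j < v i) :
    ∃ x, x ∈ fam (u i) ∧ x ∈ fam (u j) := by
  have hρi : PathIn (Edge D) (ρ (u i)) (V.src (u i)) (V.snk (v j)) := by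
    have := hρ i
    rwa [show (v * Equiv.swap i j) i = v j by
      rw [Equiv.Perm.mul_apply, Equiv.swap_apply_left]] at this
  have hρj : PathIn (Edge D) (ρ (u j)) (V.src (u j)) (V.snk (v i)) := by
    have := hρ j
    rwa [show (v * Equiv.swap i j) j = v i by
      rw [Equiv.Perm.mul_apply, Equiv.swap_apply_right]] at this
  obtain ⟨x, hx1, hx2⟩ := crossing hρi hρj hu hv
  have hab : u i ≠ u j := fun h => hij (u.injective h)
  have hvij : v j ≠ v i := fun h => hij (v.injective h).symm
  obtain ⟨k, rfl⟩ := common_is_ctr hρi hρj hab hvij hx1 hx2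
  obtain ⟨p', q', hp', hq', hxp', hxq', -, -⟩ := splice hρi hρj hx1 hx2
  have e1 : p' = fam (u i) := path_unique hp' (hfam i)
  have e2 : q' = fam (u j) := path_unique hq' (hfam j)
  exact ⟨V.ctr k, e1 ▸ hxp', e2 ▸ hxq'⟩

end Statement11Aux


/-- Proposition on `rinv(U(u,π))` versus `rinv(U(s_i u, π))`.
Here `j` is the position following `i`, `u' = u * swap i j` and
`v' = v * swap i j` interchange the entries of `u`, `v` in positions `i`, `i+1`. -/
theorem statement11 (n t : ℕ) (D : IntervalData n t)
    (u v : Equiv.Perm (Fin n)) (fam : Fin n → List (V n t))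
    (hfam : ∀ m, IsPathFromTo D (fam (u m)) (u m) (v m))
    (hcov : Covers D fam)
    (i j : Fin n) (hij : (i : ℕ) + 1 = (j : ℕ)) (hu : u j < u i) :
    (v i < v j →
      rinvU D fam u v + 1 =
        rinvU D fam (u * Equiv.swap i j) (v * Equiv.swap i j)) ∧
    (v j < v i →
      ¬ (∃ ρ : Fin n → List (V n t),
          (∀ m, IsPathFromTo D (ρ (u m)) (u m) ((v * Equiv.swap i j) m)) ∧
          Covers D ρ) →
      rinvU D fam u v =
        rinvU D fam (u * Equiv.swap i j) (v * Equiv.swap i j)) ∧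
    (v j < v i →
      (∃ ρ : Fin n → List (V n t),
          (∀ m, IsPathFromTo D (ρ (u m)) (u m) ((v * Equiv.swap i j) m)) ∧
          Covers D ρ) →
      rinvU D fam u v =
        rinvU D fam (u * Equiv.swap i j) (v * Equiv.swap i j) + 1) := by
  classical
  have hijlt : i < j := Fin.lt_def.mpr (by omega)
  have hijne : i ≠ j := ne_of_lt hijlt
  set u' := u * Equiv.swap i j with hu'
  set v' := v * Equiv.swap i j with hv'
  set S₁ : Set (Fin n × Fin n) := {p : Fin n × Fin n | p.1 < p.2 ∧
      (∃ x, x ∈ fam (u p.1) ∧ x ∈ fam (u p.2)) ∧ v p.2 < v p.1} with hS₁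
  set S₂ : Set (Fin n × Fin n) := {p : Fin n × Fin n | p.1 < p.2 ∧
      (∃ x, x ∈ fam (u' p.1) ∧ x ∈ fam (u' p.2)) ∧ v' p.2 < v' p.1} with hS₂
  have hr1 : rinvU D fam u v = S₁.ncard := rfl
  have hr2 : rinvU D fam u' v' = S₂.ncard := rfl
  have ord : ∀ p : Fin n × Fin n, p.1 < p.2 → p ≠ (i, j) →
      Equiv.swap i j p.1 < Equiv.swap i j p.2 := by
    intro p h12 hne
    have h12' : (p.1 : ℕ) < (p.2 : ℕ) := h12
    by_cases h1i : p.1 = i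
    · by_cases h2j : p.2 = j
      · exact absurd (Prod.ext h1i h2j) hne
      · have hib : (i : ℕ) < (p.2 : ℕ) := by rw [h1i] at h12'; exact h12'
        have h2i : p.2 ≠ i := fun h => by rw [h] at hib; omega
        have h2j' : (p.2 : ℕ) ≠ (j : ℕ) := fun hh => h2j (Fin.ext hh)
        rw [h1i, Equiv.swap_apply_left, Equiv.swap_apply_of_ne_of_ne h2i h2j]
        exact Fin.lt_def.mpr (by omega)
    · by_cases h1j : p.1 = j
      · have hjb : (j : ℕ) < (p.2 : ℕ) := by rw [h1j] at h12'; exact h12'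
        have h2i : p.2 ≠ i := fun h => by rw [h] at hjb; omega
        have h2j : p.2 ≠ j := fun h => by rw [h] at hjb; omega
        rw [h1j, Equiv.swap_apply_right, Equiv.swap_apply_of_ne_of_ne h2i h2j]
        exact Fin.lt_def.mpr (by omega)
      · by_cases h2i : p.2 = i
        · have hai : (p.1 : ℕ) < (i : ℕ) := by rw [h2i] at h12'; exact h12'
          rw [h2i, Equiv.swap_apply_left, Equiv.swap_apply_of_ne_of_ne h1i h1j]
          exact Fin.lt_def.mpr (by omega)
        · by_cases h2j : p.2 = j
          · have haj : (p.1 : ℕ) < (j : ℕ) := by rw [h2j] at h12'; exact h12'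
            have h1i' : (p.1 : ℕ) ≠ (i : ℕ) := fun hh => h1i (Fin.ext hh)
            rw [h2j, Equiv.swap_apply_right, Equiv.swap_apply_of_ne_of_ne h1i h1j]
            exact Fin.lt_def.mpr (by omega)
          · rw [Equiv.swap_apply_of_ne_of_ne h1i h1j,
              Equiv.swap_apply_of_ne_of_ne h2i h2j]
            exact h12
  have hu'e : ∀ x, u' (Equiv.swap i j x) = u x := by
    intro x
    show u (Equiv.swap i j (Equiv.swap i j x)) = u x
    rw [Equiv.swap_apply_self]
  have hv'e : ∀ x, v' (Equiv.swap i j x) = v x := by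
    intro x
    show v (Equiv.swap i j (Equiv.swap i j x)) = v x
    rw [Equiv.swap_apply_self]
  have eui : u' i = u j := by
    show u (Equiv.swap i j i) = u j
    rw [Equiv.swap_apply_left]
  have euj : u' j = u i := by
    show u (Equiv.swap i j j) = u i
    rw [Equiv.swap_apply_right]
  have evi : v' i = v j := by
    show v (Equiv.swap i j i) = v j
    rw [Equiv.swap_apply_left]
  have evj : v' j = v i := by
    show v (Equiv.swap i j j) = v i
    rw [Equiv.swap_apply_right]
  have himg : (fun p : Fin n × Fin n => (Equiv.swap i j p.1, Equiv.swap i j p.2)) ''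
      (S₁ \ {((i, j) : Fin n × Fin n)}) = S₂ \ {((i, j) : Fin n × Fin n)} := by
    apply Set.Subset.antisymm
    · rintro q ⟨p, ⟨hpS, hpne⟩, rfl⟩
      have hpne' : p ≠ (i, j) := hpne
      obtain ⟨hp1, hp2, hp3⟩ := hpS
      constructor
      · refine ⟨ord p hp1 hpne', ?_, ?_⟩
        · show ∃ x, x ∈ fam (u' (Equiv.swap i j p.1)) ∧ x ∈ fam (u' (Equiv.swap i j p.2))
          rw [hu'e, hu'e]
          exact hp2
        · show v' (Equiv.swap i j p.2) < v' (Equiv.swap i j p.1)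
          rw [hv'e, hv'e]
          exact hp3
      · intro hq
        have hq' : (Equiv.swap i j p.1, Equiv.swap i j p.2) = ((i, j) : Fin n × Fin n) := hq
        rw [Prod.ext_iff] at hq'
        have e1 : p.1 = j := by
          have := congrArg (Equiv.swap i j) hq'.1
          rwa [Equiv.swap_apply_self, Equiv.swap_apply_left] at this
        have e2 : p.2 = i := by
          have := congrArg (Equiv.swap i j) hq'.2
          rwa [Equiv.swap_apply_self, Equiv.swap_apply_right] at this
        rw [e1, e2] at hp1
        exact absurd (hp1.trans hijlt) (lt_irrefl _)
    · rintro q ⟨hqS, hqne⟩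
      have hqne' : q ≠ (i, j) := hqne
      obtain ⟨hq1, hq2, hq3⟩ := hqS
      refine ⟨(Equiv.swap i j q.1, Equiv.swap i j q.2), ⟨⟨ord q hq1 hqne', ?_, ?_⟩, ?_⟩, ?_⟩
      · show ∃ x, x ∈ fam (u (Equiv.swap i j q.1)) ∧ x ∈ fam (u (Equiv.swap i j q.2))
        exact hq2
      · show v (Equiv.swap i j q.2) < v (Equiv.swap i j q.1)
        exact hq3
      · intro hmem
        have h' : ((Equiv.swap i j q.1, Equiv.swap i j q.2) : Fin n × Fin n) = (i, j) := hmem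
        rw [Prod.ext_iff] at h'
        have e1 : q.1 = j := by
          have := congrArg (Equiv.swap i j) h'.1
          rwa [Equiv.swap_apply_self, Equiv.swap_apply_left] at this
        have e2 : q.2 = i := by
          have := congrArg (Equiv.swap i j) h'.2
          rwa [Equiv.swap_apply_self, Equiv.swap_apply_right] at this
        rw [e1, e2] at hq1
        exact absurd (hq1.trans hijlt) (lt_irrefl _)
      · show ((Equiv.swap i j (Equiv.swap i j q.1), Equiv.swap i j (Equiv.swap i j q.2)) :
            Fin n × Fin n) = q
        rw [Equiv.swap_apply_self, Equiv.swap_apply_self]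
  have hinj : Function.Injective
      (fun p : Fin n × Fin n => (Equiv.swap i j p.1, Equiv.swap i j p.2)) := by
    intro p q h
    rw [Prod.ext_iff] at h ⊢
    exact ⟨(Equiv.swap i j).injective h.1, (Equiv.swap i j).injective h.2⟩
  have hdiff : (S₁ \ {((i, j) : Fin n × Fin n)}).ncard =
      (S₂ \ {((i, j) : Fin n × Fin n)}).ncard := by
    rw [← himg, Set.ncard_image_of_injective _ hinj]
  have hsplit : ∀ S : Set (Fin n × Fin n), S.ncard =
      (S \ {((i, j) : Fin n × Fin n)}).ncard + (if (i, j) ∈ S then 1 else 0) := by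
    intro S
    by_cases h : (i, j) ∈ S
    · rw [if_pos h]
      exact (Set.ncard_diff_singleton_add_one h (Set.toFinite S)).symm
    · rw [if_neg h, Set.diff_singleton_eq_self h, add_zero]
  have m1 : ((i, j) ∈ S₁) ↔ ((∃ x, x ∈ fam (u i) ∧ x ∈ fam (u j)) ∧ v j < v i) :=
    ⟨fun h => ⟨h.2.1, h.2.2⟩, fun h => ⟨hijlt, h.1, h.2⟩⟩
  have m2 : ((i, j) ∈ S₂) ↔ ((∃ x, x ∈ fam (u j) ∧ x ∈ fam (u i)) ∧ v i < v j) := by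
    have base : ((i, j) ∈ S₂) ↔
        (i < j ∧ (∃ x, x ∈ fam (u' i) ∧ x ∈ fam (u' j)) ∧ v' j < v' i) := Iff.rfl
    rw [base, eui, euj, evi, evj]
    exact ⟨fun h => ⟨h.2.1, h.2.2⟩, fun h => ⟨hijlt, h.1, h.2⟩⟩
  refine ⟨?_, ?_, ?_⟩
  · intro hv
    have hint : ∃ x, x ∈ fam (u i) ∧ x ∈ fam (u j) := crossing (hfam i) (hfam j) hu hv
    have c1 : (i, j) ∉ S₁ := fun h => absurd (m1.mp h).2 (not_lt.mpr hv.le)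
    have c2 : (i, j) ∈ S₂ :=
      m2.mpr ⟨⟨hint.choose, hint.choose_spec.2, hint.choose_spec.1⟩, hv⟩
    rw [hr1, hr2, hsplit S₁, hsplit S₂, if_neg c1, if_pos c2, hdiff, add_zero]
  · intro hv hno
    have hnint : ¬ ∃ x, x ∈ fam (u i) ∧ x ∈ fam (u j) := fun hint =>
      hno (exchange_family hfam hcov hijne hint)
    have c1 : (i, j) ∉ S₁ := fun h => hnint (m1.mp h).1
    have c2 : (i, j) ∉ S₂ := fun h => absurd (m2.mp h).2 (not_lt.mpr hv.le)
    rw [hr1, hr2, hsplit S₁, hsplit S₂, if_neg c1, if_neg c2, hdiff]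
  · intro hv hex
    obtain ⟨ρ, hρ, -⟩ := hex
    have hint := int_of_exchange hfam hρ hijne hu hv
    have c1 : (i, j) ∈ S₁ := m1.mpr ⟨hint, hv⟩
    have c2 : (i, j) ∉ S₂ := fun h => absurd (m2.mp h).2 (not_lt.mpr hv.le)
    rw [hr1, hr2, hsplit S₁, hsplit S₂, if_pos c1, if_neg c2, hdiff, add_zero]


end

end ZigZag
end

section
/- Let P be a unit interval order on {1,…,n}, labeled so that whenever #{z : z <_P x} − #{z : z >_P x} < #{z : z <_P y} − #{z : z >_P y} one has x < y as integers. Let λ = (λ_1,…,λ_r) be a partition of n. Then Σ_κ q^{asc(κ)} = Σ_U q^{inv(U)} in ℤ[q], where: κ ranges over all proper colorings κ : {1,…,n} → {1,…,r} of the incomparability graph of P (κ(x) ≠ κ(y) whenever x ≠ y are incomparable in P) satisfying |κ^{−1}(i)| = λ_{r+1−i} for each i, and asc(κ) = #{(x,y) : x < y, x and y incomparable in P, κ(x) < κ(y)}; and U ranges over all column-strict P-tableaux of shape λ^tr, with inv(U) = #{(x,y) : x and y incomparable in P, x > y, and x lies in a column of U strictly to the left of the column containing y}. -/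
namespace ZigZag

noncomputable section

attribute [local instance] Classical.propDecidable

variable {n t : ℕ}

private def colsOf {n L : ℕ} (κ : Fin n → Fin L) (c : Fin L) : List (Fin n) :=
  (Finset.univ.filter fun x => κ x = c.rev).sort (· ≤ ·)

private lemma mem_colsOf {n L : ℕ} (κ : Fin n → Fin L) (c : Fin L) (x : Fin n) :
    x ∈ colsOf κ c ↔ κ x = c.rev := by
  simp [colsOf]

private lemma sorted_eq_sort {n : ℕ} (l : List (Fin n)) (hl : l.Pairwise (· < ·)) :
    l.toFinset.sort (· ≤ ·) = l := by
  have hnd : l.Nodup := hl.imp ne_of_lt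
  refine List.Perm.eq_of_pairwise' (Finset.pairwise_sort _ _) (hl.imp le_of_lt) ?_
  exact List.perm_of_nodup_nodup_toFinset_eq (Finset.sort_nodup _ _) hnd
    (Finset.sort_toFinset _ _)

/-- for a suitably labeled unit interval order `P` on
`{1,…,n}` and a partition `λ` of `n` with `r` parts, the ascent generating
function over proper colorings with class sizes `λ_{r+1-i}` equals the
inversion generating function over column-strict `P`-tableaux of shape
`λ^tr` (encoded by their columns, of lengths `λ_1, …, λ_r`). -/
theorem statement13 (n : ℕ) (r : Fin n → Fin n → Prop)
    (hirr : ∀ x, ¬ r x x) (htrans : ∀ x y z, r x y → r y z → r x z)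
    (huio : UnitIntervalOrder r)
    (hlabel : ∀ x y : Fin n,
      ((Set.ncard {z | r z x} : ℤ) - (Set.ncard {z | r x z} : ℤ) <
       (Set.ncard {z | r z y} : ℤ) - (Set.ncard {z | r y z} : ℤ)) → x < y)
    (lam : List ℕ) (hlam : IsPartition lam n) :
    (∑ᶠ κ : {κ : Fin n → Fin lam.length //
        (∀ x y, Incomp r x y → κ x ≠ κ y) ∧
        ∀ i : Fin lam.length, Set.ncard {x | κ x = i} = lam.get i.rev},
      (Polynomial.X : Polynomial ℤ) ^
        Set.ncard {p : Fin n × Fin n |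
          p.1 < p.2 ∧ Incomp r p.1 p.2 ∧ κ.1 p.1 < κ.1 p.2}) =
    ∑ᶠ T : {cols : Fin lam.length → List (Fin n) //
        (∀ c, (cols c).length = lam.get c) ∧
        (∀ c, (cols c).Chain' r) ∧
        (∀ c, (cols c).Nodup) ∧
        ∀ x : Fin n, ∃! c, x ∈ cols c},
      (Polynomial.X : Polynomial ℤ) ^
        Set.ncard {p : Fin n × Fin n |
          (∃ c1 c2, c1 < c2 ∧ p.1 ∈ T.1 c1 ∧ p.2 ∈ T.1 c2) ∧
          Incomp r p.1 p.2 ∧ p.2 < p.1} := by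
  classical
  haveI : IsTrans (Fin n) r := ⟨htrans⟩
  -- the labeling forces `r x y → x < y`
  have hrlt : ∀ x y, r x y → x < y := by
    intro x y hxy
    apply hlabel
    have h1 : Set.ncard {z | r z x} < Set.ncard {z | r z y} := by
      apply Set.ncard_lt_ncard _ (Set.toFinite _)
      exact ⟨fun z hz => htrans _ _ _ hz hxy,
        fun hsub => hirr x (hsub (show x ∈ {z | r z y} from hxy))⟩
    have h2 : Set.ncard {z | r y z} < Set.ncard {z | r x z} := by
      apply Set.ncard_lt_ncard _ (Set.toFinite _)
      exact ⟨fun z hz => htrans _ _ _ hxy hz,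
        fun hsub => hirr y (hsub (show y ∈ {z | r x z} from hxy))⟩
    omega
  have hsymm : ∀ x y, Incomp r x y → Incomp r y x :=
    fun x y h => ⟨h.1.symm, h.2.2, h.2.1⟩
  have hcomp : ∀ x y : Fin n, ¬ Incomp r x y → x ≠ y → r x y ∨ r y x := by
    intro x y h hne
    by_contra h2
    push_neg at h2
    exact h ⟨hne, h2.1, h2.2⟩
  -- properties of `colsOf κ`
  have e1 : ∀ (κ : Fin n → Fin lam.length),
      (∀ i : Fin lam.length, Set.ncard {x | κ x = i} = lam.get i.rev) →
      ∀ c, (colsOf κ c).length = lam.get c := by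
    intro κ hκ c
    have h := hκ c.rev
    rw [Fin.rev_rev] at h
    rw [← h, colsOf, Finset.length_sort, Set.ncard_eq_toFinset_card']
    congr 1
    ext x
    simp
  have e2 : ∀ (κ : Fin n → Fin lam.length),
      (∀ x y, Incomp r x y → κ x ≠ κ y) →
      ∀ c, (colsOf κ c).Chain' r := by
    intro κ hκ c
    have hs : (colsOf κ c).Pairwise (· < ·) := (Finset.sortedLT_sort _).pairwise
    have hp : (colsOf κ c).Pairwise r := by
      refine hs.imp_of_mem ?_
      intro a b ha hb hab
      rw [mem_colsOf] at ha hb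
      rcases hcomp a b (fun hinc => hκ a b hinc (ha.trans hb.symm)) (ne_of_lt hab) with h | h
      · exact h
      · exact absurd (hrlt _ _ h) (not_lt.mpr hab.le)
    exact hp.isChain
  have e3 : ∀ (κ : Fin n → Fin lam.length), ∀ c, (colsOf κ c).Nodup :=
    fun κ c => Finset.sort_nodup _ _
  have e4 : ∀ (κ : Fin n → Fin lam.length), ∀ x : Fin n, ∃! c, x ∈ colsOf κ c := by
    intro κ x
    refine ⟨(κ x).rev, ?_, ?_⟩
    · show x ∈ colsOf κ ((κ x).rev)
      rw [mem_colsOf, Fin.rev_rev]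
    · intro c hc
      have hc' : x ∈ colsOf κ c := hc
      rw [mem_colsOf] at hc'
      rw [hc', Fin.rev_rev]
  refine finsum_eq_of_bijective
    (fun κ => ⟨colsOf κ.1, e1 κ.1 κ.2.2, e2 κ.1 κ.2.1, e3 κ.1, e4 κ.1⟩) ⟨?_, ?_⟩ ?_
  · -- injectivity
    intro κ κ' h
    have h' : colsOf κ.1 = colsOf κ'.1 := congrArg Subtype.val h
    apply Subtype.ext
    funext x
    have hx : x ∈ colsOf κ'.1 ((κ.1 x).rev) := by
      rw [← h', mem_colsOf, Fin.rev_rev]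
    rw [mem_colsOf, Fin.rev_rev] at hx
    exact hx.symm
  · -- surjectivity
    rintro ⟨cols, hl, hc, hnd, hm⟩
    obtain ⟨f, hf, hu⟩ : ∃ f : Fin n → Fin lam.length,
        (∀ x, x ∈ cols (f x)) ∧ ∀ x c, x ∈ cols c → c = f x :=
      ⟨fun x => (hm x).choose, fun x => (hm x).choose_spec.1,
        fun x c h => (hm x).choose_spec.2 c h⟩
    have hmem : ∀ (x : Fin n) (c : Fin lam.length), x ∈ cols c ↔ f x = c := by
      intro x c
      exact ⟨fun h => (hu x c h).symm ▸ rfl, fun h => h ▸ hf x⟩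
    have hmem' : ∀ (x : Fin n) (c : Fin lam.length), x ∈ cols c ↔ (fun x => (f x).rev) x = c.rev := by
      intro x c
      rw [hmem]
      simp only
      exact ⟨fun h => h ▸ rfl, fun h => Fin.rev_injective h⟩
    have hsortedlt : ∀ c, (cols c).Pairwise (· < ·) := by
      intro c
      exact (List.isChain_iff_pairwise.mp (hc c)).imp (fun h => hrlt _ _ h)
    refine ⟨⟨fun x => (f x).rev, ?_, ?_⟩, ?_⟩
    · -- proper coloring
      intro x y hinc hxy
      have hfx : f x = f y := Fin.rev_injective hxy
      have hpair : (cols (f y)).Pairwise (fun a b => r a b ∨ r b a) :=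
        (List.isChain_iff_pairwise.mp (hc (f y))).imp (fun h => Or.inl h)
      haveI : Std.Symm (fun a b => r a b ∨ r b a) := ⟨fun a b h => h.symm⟩
      have := hpair.forall (hfx ▸ hf x) (hf y) hinc.1
      rcases this with h | h
      · exact hinc.2.1 h
      · exact hinc.2.2 h
    · -- class sizes
      intro i
      have hset : {x | (f x).rev = i} = {x | x ∈ cols i.rev} := by
        ext x
        simp only [Set.mem_setOf_eq, hmem x i.rev]
        constructor
        · intro h
          rw [← h, Fin.rev_rev]
        · intro h
          rw [h, Fin.rev_rev]
      rw [hset]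
      have : {x | x ∈ cols i.rev} = ↑(cols i.rev).toFinset := by
        ext x; simp
      rw [this, Set.ncard_coe_finset, List.toFinset_card_of_nodup (hnd i.rev)]
      exact hl i.rev
    · -- image is the given tableau
      apply Subtype.ext
      funext c
      show colsOf (fun x => (f x).rev) c = cols c
      have hft : (Finset.univ.filter fun x => (f x).rev = c.rev) = (cols c).toFinset := by
        ext x
        simp only [Finset.mem_filter, Finset.mem_univ, true_and, List.mem_toFinset]
        exact (hmem' x c).symm
      rw [colsOf, hft]
      exact sorted_eq_sort _ (hsortedlt c)
  · -- the statistics agree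
    intro κ
    congr 1
    have himage : {p : Fin n × Fin n |
        (∃ c1 c2, c1 < c2 ∧ p.1 ∈ colsOf κ.1 c1 ∧ p.2 ∈ colsOf κ.1 c2) ∧
          Incomp r p.1 p.2 ∧ p.2 < p.1}
        = Prod.swap '' {p : Fin n × Fin n |
            p.1 < p.2 ∧ Incomp r p.1 p.2 ∧ κ.1 p.1 < κ.1 p.2} := by
      rw [Set.image_swap_eq_preimage_swap]
      ext ⟨a, b⟩
      simp only [Set.mem_setOf_eq, Set.mem_preimage, Prod.swap_prod_mk, mem_colsOf]
      constructor
      · rintro ⟨⟨c1, c2, hc12, h1, h2⟩, hinc, hba⟩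
        refine ⟨hba, hsymm _ _ hinc, ?_⟩
        rw [h1, h2]
        exact Fin.rev_lt_rev.mpr hc12
      · rintro ⟨hba, hinc, hk⟩
        exact ⟨⟨(κ.1 a).rev, (κ.1 b).rev, Fin.rev_lt_rev.mpr hk,
          (Fin.rev_rev _).symm, (Fin.rev_rev _).symm⟩, hsymm _ _ hinc, hba⟩
    rw [himage, Set.ncard_image_of_injective _ Prod.swap_injective]


end

end ZigZag
end
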